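/- For every integer n ≥ 1, the real number p(n) = (2n−1)!!/(2^n · n!) satisfies p(n) < h(n), where h(n) = (1 + 1/(22n))/√(π·n). -/

import Mathlib

open Nat Real

theorem stmt_11 (n : ℕ) (hn : 1 ≤ n) :
    ((2 * n - 1)‼ : ℝ) / (2 ^ n * n.factorial)
      < (1 + 1 / (22 * (n : ℝ))) / Real.sqrt (Real.pi * n) := by
  have hnR : (0:ℝ) < n := by exact_mod_cast hn
  -- key factorial identity
  have hkey : (2 * n - 1)‼ * (2 ^ n * n.factorial) = (2 * n).factorial := by
    have h1 : 2 * n - 1 + 1 = 2 * n := by omega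
    have := Nat.factorial_eq_mul_doubleFactorial (2 * n - 1)
    rw [h1, Nat.doubleFactorial_two_mul] at this
    rw [this]; ring
  have hF : (0:ℝ) < (n.factorial : ℝ) := by exact_mod_cast n.factorial_pos
  have hG : (0:ℝ) < ((2*n).factorial : ℝ) := by exact_mod_cast (2*n).factorial_pos
  have h2 : (0:ℝ) < (2:ℝ) ^ n := by positivity
  -- p as a real number
  set p : ℝ := ((2 * n - 1)‼ : ℝ) / (2 ^ n * n.factorial) with hp
  have hp_pos : 0 < p := by
    apply _root_.div_pos _ (by positivity)
    exact_mod_cast (2*n-1).doubleFactorial_pos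
  have hpeq : p * (2 ^ n * (n.factorial:ℝ)) ^ 2 = ((2*n).factorial : ℝ) := by
    rw [hp, sq, ← mul_assoc, div_mul_cancel₀ _ (by positivity : (2:ℝ) ^ n * (n.factorial:ℝ) ≠ 0)]
    exact_mod_cast congrArg (Nat.cast : ℕ → ℝ) hkey
  have hGp : ((2*n).factorial : ℝ) ^ 2 = p ^ 2 * 2 ^ (4*n) * (n.factorial:ℝ) ^ 4 := by
    rw [← hpeq]; ring
  -- Wallis
  have hW := Real.Wallis.le_W n
  have hWeq := Real.Wallis.W_eq_factorial_ratio n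
  have h2n1 : (0:ℝ) < 2 * (n:ℝ) + 1 := by positivity
  -- π * n * p ^ 2 < 1
  have hsq : Real.pi * n * p ^ 2 < 1 := by
    have hWval : Real.Wallis.W n * (2 * (n:ℝ) + 1) * p ^ 2 = 1 := by
      rw [hWeq, hGp]
      field_simp
    have hlt : Real.pi * n < Real.Wallis.W n * (2 * (n:ℝ) + 1) := by
      have hstep : Real.pi * n < (2 * (n:ℝ) + 1) / (2 * n + 2) * (Real.pi / 2) * (2 * n + 1) := by
        rw [div_mul_eq_mul_div, div_mul_eq_mul_div, lt_div_iff₀ (by positivity)]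
        nlinarith [Real.pi_pos, hnR]
      calc Real.pi * n < (2 * (n:ℝ) + 1) / (2 * n + 2) * (Real.pi / 2) * (2 * n + 1) := hstep
        _ ≤ Real.Wallis.W n * (2 * (n:ℝ) + 1) := by
            apply mul_le_mul_of_nonneg_right hW h2n1.le
    calc Real.pi * n * p ^ 2 < Real.Wallis.W n * (2 * (n:ℝ) + 1) * p ^ 2 := by
          apply mul_lt_mul_of_pos_right hlt (by positivity)
      _ = 1 := hWval
  -- conclude
  have hpin : (0:ℝ) < Real.pi * n := by positivity
  have hsqrt : (0:ℝ) < Real.sqrt (Real.pi * n) := Real.sqrt_pos.mpr hpin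
  have h1 : p < 1 / Real.sqrt (Real.pi * n) := by
    rw [one_div, ← Real.sqrt_inv, Real.lt_sqrt hp_pos.le, ← one_div, lt_div_iff₀ hpin]
    nlinarith [hsq]
  calc p < 1 / Real.sqrt (Real.pi * n) := h1
    _ < (1 + 1 / (22 * (n : ℝ))) / Real.sqrt (Real.pi * n) := by
        gcongr
        have : (0:ℝ) < 1 / (22 * (n:ℝ)) := by positivity
        linarith
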